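/- Proposition A.5: For every closed convex polyhedral cone C in X and every (x,λ) ∈ X × X* with λ(x) > 0, ψ_C(x,λ) = 0. Consequently, for every conic function f = Σᵢ nᵢ ξ_{C_i} (a finite ℤ-linear combination of characteristic functions of closed convex polyhedral cones Cᵢ with integer coefficients nᵢ), Σᵢ nᵢ ψ_{C_i}(x,λ) = 0 whenever λ(x) > 0. -/

import Mathlib

open Pointwise
open scoped Classical

namespace GKM

variable {V : Type*} [AddCommGroup V] [Module ℝ V]

/-- The dual cone `C* = {λ | λ ≥ 0 on C}` of a subset `C` of `V`. -/
def dualCone (C : Set V) : Set (Module.Dual ℝ V) := {l | ∀ x ∈ C, 0 ≤ l x}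

/-- `C` is a closed convex polyhedral cone: the set of nonnegative linear
combinations of a finite subset of `V`. -/
def IsPolyhedralCone (C : Set V) : Prop :=
  ∃ S : Finset V, C = {x | ∃ c : V → ℝ, (∀ v, 0 ≤ c v) ∧ x = ∑ v ∈ S, c v • v}

/-- `F` is a (closed) face of the cone `C`. -/
def IsFaceOf (F C : Set V) : Prop := ∃ l ∈ dualCone C, F = C ∩ {x | l x = 0}

/-- The dimension of (the linear span of) a subset of `V`. -/
noncomputable def sdim (F : Set V) : ℕ := Module.finrank ℝ (Submodule.span ℝ F)

/-- `ℤ`-valued characteristic function `ξ_S`. -/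
noncomputable def ind {α : Type*} (S : Set α) (a : α) : ℤ := if a ∈ S then 1 else 0

/-- `ψ_C(x,λ) = Σ_{F face of C} (−1)^{dim F} ξ_{(F^⊥)*}(x) · ξ_{F*}(λ)`,
where `(F^⊥)* = C + span F` and `F*` is the dual cone of `F`. -/
noncomputable def psi (C : Set V) (x : V) (l : Module.Dual ℝ V) : ℤ :=
  ∑ᶠ F ∈ {F : Set V | IsFaceOf F C},
    (-1 : ℤ) ^ sdim F * ind (C + (Submodule.span ℝ F : Set V)) x * ind (dualCone F) l

/-- `x` is regular for the hyperplane arrangement `{ker α | α ∈ S}`. -/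
def IsRegular (S : Set (Module.Dual ℝ V)) (x : V) : Prop := ∀ α ∈ S, α x ≠ 0

/-- `C` is a chamber of the arrangement `{ker α | α ∈ S}`: a connected component of
the set of regular points, equivalently (for a finite arrangement, which is the case
throughout) a nonempty maximal subset on which each `α ∈ S` has constant sign. -/
def IsChamber (S : Set (Module.Dual ℝ V)) (C : Set V) : Prop :=
  ∃ x, IsRegular S x ∧ C = {y | ∀ α ∈ S, 0 < α x * α y}

/-- The closure of a chamber, described combinatorially (for a chamber of a finite
hyperplane arrangement this coincides with the topological closure). -/
def chClosure (S : Set (Module.Dual ℝ V)) (C : Set V) : Set V :=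
  {y | ∀ α ∈ S, ∀ x ∈ C, 0 ≤ α x * α y}

/-- The hyperplane `ker α` separates `C₁` and `C₂`. -/
def Separates (α : Module.Dual ℝ V) (C₁ C₂ : Set V) : Prop :=
  ∀ x₁ ∈ C₁, ∀ x₂ ∈ C₂, α x₁ * α x₂ < 0

/-- `l(C₁,C₂)`: the number of hyperplanes of the arrangement separating `C₁`,`C₂`. -/
noncomputable def sep (S : Set (Module.Dual ℝ V)) (C₁ C₂ : Set V) : ℕ :=
  {H : Set V | ∃ α ∈ S, H = {x | α x = 0} ∧ Separates α C₁ C₂}.ncard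

/-- `ε(C₁,C₂) = (−1)^{l(C₁,C₂)}`. -/
noncomputable def eps (S : Set (Module.Dual ℝ V)) (C₁ C₂ : Set V) : ℤ :=
  (-1) ^ sep S C₁ C₂

/-- `ψ_R(C₀,x,λ) = Σ_C ε(C₀,C) ψ_{C̄}(x,λ)`, the sum over all chambers `C`. -/
noncomputable def psiR (S : Set (Module.Dual ℝ V)) (C₀ : Set V) (x : V)
    (l : Module.Dual ℝ V) : ℤ :=
  ∑ᶠ C ∈ {C : Set V | IsChamber S C}, eps S C₀ C * psi (chClosure S C) x l

/-- `λ ∈ X*` is `R`-regular: it vanishes on no nonzero element of a 1-dimensional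
face of the closure of a chamber in `X`. -/
def RRegular (S : Set (Module.Dual ℝ V)) (l : Module.Dual ℝ V) : Prop :=
  ∀ C : Set V, IsChamber S C → ∀ F : Set V, IsFaceOf F (chClosure S C) →
    sdim F = 1 → ∀ ω ∈ F, ω ≠ (0 : V) → l ω ≠ 0

/-- `ω` is a nonzero element of a 1-dimensional face of the closure of `C₀`. -/
def InOneDimFaceOfClosure (S : Set (Module.Dual ℝ V)) (C₀ : Set V) (ω : V) : Prop :=
  ω ≠ 0 ∧ ∃ F : Set V, IsFaceOf F (chClosure S C₀) ∧ sdim F = 1 ∧ ω ∈ F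

/-- `(X, X*, R, R∨)` is a (reduced, crystallographic) root system, `R ⊂ X*`
spanning `X*`, with coroot `α∨ = coroot α ∈ X` for each `α ∈ R`. -/
structure IsRootSystem (R : Set (Module.Dual ℝ V)) (coroot : Module.Dual ℝ V → V) : Prop where
  finite : R.Finite
  ne_zero : ∀ α ∈ R, α ≠ 0
  span_top : Submodule.span ℝ R = ⊤
  root_coroot_two : ∀ α ∈ R, α (coroot α) = 2
  pairing_int : ∀ α ∈ R, ∀ β ∈ R, ∃ n : ℤ, β (coroot α) = (n : ℝ)
  reflect_root_mem : ∀ α ∈ R, ∀ β ∈ R, β - β (coroot α) • α ∈ R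
  reflect_coroot : ∀ α ∈ R, ∀ β ∈ R,
    coroot (β - β (coroot α) • α) = coroot β - α (coroot β) • coroot α
  reduced : ∀ α ∈ R, ∀ c : ℝ, c • α ∈ R → c = 1 ∨ c = -1

/-- The Weyl group `W(R)`, the subgroup of `GL(X)` generated by the reflections
`s_α : x ↦ x − α(x)·α∨`, `α ∈ R`. -/
def weylGroup (R : Set (Module.Dual ℝ V)) (coroot : Module.Dual ℝ V → V) :
    Subgroup (V ≃ₗ[ℝ] V) :=
  Subgroup.closure {w : V ≃ₗ[ℝ] V | ∃ α ∈ R, ∀ x, w x = x - α x • coroot α}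

/-- The set `R⁺` of roots positive on the chamber `C`. -/
def posRoots (R : Set (Module.Dual ℝ V)) (C : Set V) : Set (Module.Dual ℝ V) :=
  {α ∈ R | ∀ x ∈ C, 0 < α x}

/-- The root system `R_ω = {α ∈ R | α(ω) = 0}` viewed on the quotient `X/ℝω`:
the set of functionals on `X/ℝω` whose pullback to `X` lies in `R`
(such a pullback automatically kills `ω`, hence lies in `R_ω`). -/
def quotRoots (R : Set (Module.Dual ℝ V)) (ω : V) :
    Set (Module.Dual ℝ (V ⧸ Submodule.span ℝ ({ω} : Set V))) :=
  {β | β.comp (Submodule.span ℝ ({ω} : Set V)).mkQ ∈ R}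

/-- The root system `R_α` (roots `β` with `α(β∨) = 0`) restricted to the
hyperplane `Y = ker α`. -/
def subRoots (R : Set (Module.Dual ℝ V)) (coroot : Module.Dual ℝ V → V)
    (α : Module.Dual ℝ V) : Set (Module.Dual ℝ ↥(LinearMap.ker α)) :=
  {m | ∃ β ∈ R, α (coroot β) = 0 ∧ m = β.comp (LinearMap.ker α).subtype}



/-! ### Auxiliary development for Proposition A.5 -/

/-- The cone generated by a finite set. -/
def coneOf (T : Finset V) : Set V :=
  {x | ∃ c : V → ℝ, (∀ v, 0 ≤ c v) ∧ x = ∑ v ∈ T, c v • v}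

lemma zero_mem_coneOf (T : Finset V) : (0 : V) ∈ coneOf T :=
  ⟨0, fun _ => le_refl 0, by simp⟩

lemma mem_coneOf_self {T : Finset V} {v : V} (hv : v ∈ T) : v ∈ coneOf T := by
  refine ⟨fun u => if u = v then 1 else 0, fun u => by positivity, ?_⟩
  rw [Finset.sum_eq_single v]
  · simp
  · intro b _ hb; simp [hb]
  · intro h; exact absurd hv h

lemma coneOf_mono {S T : Finset V} (h : S ⊆ T) : coneOf S ⊆ coneOf T := by
  rintro x ⟨c, hc, rfl⟩
  refine ⟨fun v => if v ∈ S then c v else 0,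
    fun v => by by_cases hv : v ∈ S <;> simp [hv, hc v], ?_⟩
  rw [← Finset.sum_subset h (fun v _ hv => by simp [hv])]
  exact Finset.sum_congr rfl fun v hv => by simp [hv]

lemma add_mem_coneOf {T : Finset V} {x y : V} (hx : x ∈ coneOf T) (hy : y ∈ coneOf T) :
    x + y ∈ coneOf T := by
  obtain ⟨c, hc, rfl⟩ := hx
  obtain ⟨d, hd, rfl⟩ := hy
  exact ⟨c + d, fun v => add_nonneg (hc v) (hd v), by
    simp [add_smul, Finset.sum_add_distrib]⟩

lemma smul_mem_coneOf {T : Finset V} {x : V} {t : ℝ} (ht : 0 ≤ t) (hx : x ∈ coneOf T) :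
    t • x ∈ coneOf T := by
  obtain ⟨c, hc, rfl⟩ := hx
  exact ⟨t • c, fun v => mul_nonneg ht (hc v), by
    simp [Finset.smul_sum, smul_smul]⟩

lemma coneOf_subset {T : Finset V} {C : Set V} (h0 : (0:V) ∈ C)
    (hT : ∀ v ∈ T, v ∈ C)
    (hadd : ∀ x ∈ C, ∀ y ∈ C, x + y ∈ C)
    (hsmul : ∀ (t : ℝ), 0 ≤ t → ∀ x ∈ C, t • x ∈ C) :
    coneOf T ⊆ C := by
  rintro x ⟨c, hc, rfl⟩
  classical
  suffices H : ∀ s : Finset V, (∀ v ∈ s, v ∈ C) → ∑ v ∈ s, c v • v ∈ C from H T hT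
  intro s
  induction s using Finset.induction with
  | empty => intro _; simpa using h0
  | @insert j s hj ih =>
    intro hs
    rw [Finset.sum_insert hj]
    exact hadd _ (hsmul _ (hc j) _ (hs j (Finset.mem_insert_self j s))) _
      (ih (fun v hv => hs v (Finset.mem_insert_of_mem hv)))

lemma coneOf_subset_coneOf {S : Finset V} {T : Finset V} (h : ∀ v ∈ S, v ∈ coneOf T) :
    coneOf S ⊆ coneOf T :=
  coneOf_subset (zero_mem_coneOf T) h (fun _ hx _ hy => add_mem_coneOf hx hy)
    (fun _ ht _ hx => smul_mem_coneOf ht hx)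

lemma mem_coneOf_union {S T : Finset V} {x : V} :
    x ∈ coneOf (S ∪ T) ↔ ∃ a ∈ coneOf S, ∃ b ∈ coneOf T, x = a + b := by
  constructor
  · rintro ⟨c, hc, rfl⟩
    refine ⟨∑ v ∈ S, c v • v, ⟨c, hc, rfl⟩, ∑ v ∈ T \ S, c v • v, ?_, ?_⟩
    · refine ⟨fun v => if v ∈ T \ S then c v else 0,
        fun v => by by_cases hv : v ∈ T \ S <;> simp [hv, hc v], ?_⟩
      rw [← Finset.sum_subset (Finset.sdiff_subset : T \ S ⊆ T) (fun v _ hv => by simp [hv])]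
      exact Finset.sum_congr rfl fun v hv => by simp [hv]
    · rw [← Finset.sum_union (Finset.disjoint_sdiff), Finset.union_sdiff_self_eq_union]
  · rintro ⟨a, ha, b, hb, rfl⟩
    exact add_mem_coneOf (coneOf_mono Finset.subset_union_left ha)
      (coneOf_mono Finset.subset_union_right hb)

lemma coneOf_union (S T : Finset V) : coneOf (S ∪ T) = coneOf S + coneOf T := by
  ext x
  rw [mem_coneOf_union]
  simp only [Set.mem_add]
  constructor
  · rintro ⟨a, ha, b, hb, rfl⟩; exact ⟨a, ha, b, hb, rfl⟩
  · rintro ⟨a, ha, b, hb, rfl⟩; exact ⟨a, ha, b, hb, rfl⟩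

lemma coneOf_subset_span (T : Finset V) : coneOf T ⊆ (Submodule.span ℝ (T : Set V) : Set V) := by
  rintro x ⟨c, hc, rfl⟩
  exact Submodule.sum_smul_mem _ _ (fun v hv => Submodule.subset_span hv)

lemma span_coneOf (T : Finset V) :
    Submodule.span ℝ (coneOf T) = Submodule.span ℝ (T : Set V) := by
  refine le_antisymm (Submodule.span_le.2 (coneOf_subset_span T)) (Submodule.span_mono ?_)
  intro v hv
  exact mem_coneOf_self hv

/-- a functional nonneg on generators is nonneg on the cone -/
lemma nonneg_on_coneOf {T : Finset V} {l : Module.Dual ℝ V}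
    (h : ∀ v ∈ T, 0 ≤ l v) {x : V} (hx : x ∈ coneOf T) : 0 ≤ l x := by
  obtain ⟨c, hc, rfl⟩ := hx
  rw [map_sum]
  refine Finset.sum_nonneg fun v hv => ?_
  rw [map_smul]
  exact mul_nonneg (hc v) (h v hv)

lemma zero_on_coneOf {T : Finset V} {l : Module.Dual ℝ V}
    (h : ∀ v ∈ T, l v = 0) {x : V} (hx : x ∈ coneOf T) : l x = 0 := by
  obtain ⟨c, hc, rfl⟩ := hx
  rw [map_sum]
  refine Finset.sum_eq_zero fun v hv => by rw [map_smul, h v hv, smul_eq_mul, mul_zero]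

lemma mem_dualCone_coneOf {T : Finset V} {l : Module.Dual ℝ V} :
    l ∈ dualCone (coneOf T) ↔ ∀ v ∈ T, 0 ≤ l v :=
  ⟨fun h v hv => h v (mem_coneOf_self hv), fun h x hx => nonneg_on_coneOf h hx⟩

/-- zero on a set implies zero on its span -/
lemma zero_on_span {G : Set V} {l : Module.Dual ℝ V} (h : ∀ x ∈ G, l x = 0) :
    ∀ x ∈ Submodule.span ℝ G, l x = 0 := by
  intro x hx
  have : Submodule.span ℝ G ≤ LinearMap.ker l := Submodule.span_le.2 fun y hy => h y hy
  exact this hx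

lemma neg_cancel_max (c : ℝ) : max c 0 - max (-c) 0 = c := by
  rcases le_total c 0 with h | h
  · rw [max_eq_right h, max_eq_left (by linarith)]; ring
  · rw [max_eq_left h, max_eq_right (by linarith)]; ring

/-- span of a finite set as a cone over `T ∪ -T` -/
lemma span_eq_coneOf_union_neg (T : Finset V) :
    (Submodule.span ℝ (T : Set V) : Set V) = coneOf (T ∪ T.image (fun v => -v)) := by
  apply Set.eq_of_subset_of_subset
  · intro x hx
    rw [SetLike.mem_coe, Submodule.mem_span_finset] at hx
    obtain ⟨c, -, rfl⟩ := hx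
    rw [mem_coneOf_union]
    refine ⟨∑ v ∈ T, (max (c v) 0) • v, ⟨fun v => max (c v) 0, fun v => le_max_right _ _, rfl⟩,
      ∑ v ∈ T, (max (-(c v)) 0) • (-v), ?_, ?_⟩
    · refine ⟨fun u => max (-(c (-u))) 0, fun u => le_max_right _ _, ?_⟩
      rw [Finset.sum_image (by intro a _ b _ h; exact neg_injective h)]
      simp
    · rw [← Finset.sum_add_distrib]
      refine Finset.sum_congr rfl fun v _ => ?_
      rw [smul_neg, ← sub_eq_add_neg, ← sub_smul, neg_cancel_max]
  · refine coneOf_subset (Submodule.zero_mem _) ?_ (fun x hx y hy => Submodule.add_mem _ hx hy)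
      (fun t _ x hx => Submodule.smul_mem _ t hx)
    intro v hv
    rcases Finset.mem_union.1 hv with h | h
    · exact Submodule.subset_span h
    · obtain ⟨u, hu, rfl⟩ := Finset.mem_image.1 h
      exact Submodule.neg_mem _ (Submodule.subset_span hu)

/-- generalized Farkas lemma over an indexed family, by induction on the index set -/
lemma farkas_fam {ι : Type*} (s : Finset ι) :
    ∀ (g : ι → V) (y : V),
      (¬ ∃ c : ι → ℝ, (∀ i, 0 ≤ c i) ∧ y = ∑ i ∈ s, c i • g i) →
      ∃ l : Module.Dual ℝ V, (∀ i ∈ s, 0 ≤ l (g i)) ∧ l y < 0 := by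
  classical
  induction s using Finset.induction with
  | empty =>
    intro g y hy
    have hy0 : y ≠ 0 := fun h => hy ⟨0, fun _ => le_refl 0, by simp [h]⟩
    have h1 := (Module.forall_dual_apply_eq_zero_iff ℝ y).not.2 hy0
    push_neg at h1
    obtain ⟨φ, hφ⟩ := h1
    rcases lt_or_gt_of_ne hφ with h | h
    · exact ⟨φ, fun i hi => absurd hi (Finset.notMem_empty i), h⟩
    · exact ⟨-φ, fun i hi => absurd hi (Finset.notMem_empty i), by simpa using h⟩
  | @insert j s hj ih =>
    intro g y hy
    have hys : ¬ ∃ c : ι → ℝ, (∀ i, 0 ≤ c i) ∧ y = ∑ i ∈ s, c i • g i := by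
      rintro ⟨c, hc, rfl⟩
      refine hy ⟨fun i => if i = j then 0 else c i,
        fun i => by by_cases h : i = j <;> simp [h, hc i], ?_⟩
      rw [Finset.sum_insert hj]
      beta_reduce
      rw [if_pos rfl, zero_smul, zero_add]
      refine Finset.sum_congr rfl fun i hi => ?_
      have hij : i ≠ j := fun h => hj (h ▸ hi)
      beta_reduce
      rw [if_neg hij]
    obtain ⟨l₀, hl₀s, hl₀y⟩ := ih g y hys
    by_cases hw : 0 ≤ l₀ (g j)
    · refine ⟨l₀, fun i hi => ?_, hl₀y⟩
      rcases Finset.mem_insert.1 hi with rfl | hi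
      · exact hw
      · exact hl₀s i hi
    · push_neg at hw
      set w := g j with hwdef
      have hlw : l₀ w ≠ 0 := ne_of_lt hw
      set π : V →ₗ[ℝ] V := LinearMap.id - ((l₀ w)⁻¹ • l₀).smulRight w with hπ
      have hπv : ∀ v, π v = v - ((l₀ w)⁻¹ * l₀ v) • w := by
        intro v
        rw [hπ, LinearMap.sub_apply, LinearMap.id_apply, LinearMap.smulRight_apply,
          LinearMap.smul_apply, smul_eq_mul]
      have hπw : π w = 0 := by
        rw [hπv, inv_mul_cancel₀ hlw, one_smul, sub_self]
      have hproj : ¬ ∃ d : ι → ℝ, (∀ i, 0 ≤ d i) ∧ π y = ∑ i ∈ s, d i • π (g i) := by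
        rintro ⟨d, hd, hrep⟩
        apply hy
        set t : ℝ := (l₀ w)⁻¹ * (l₀ y - ∑ i ∈ s, d i * l₀ (g i)) with ht
        have htpos : 0 ≤ t := by
          have hsum : 0 ≤ ∑ i ∈ s, d i * l₀ (g i) :=
            Finset.sum_nonneg fun i hi => mul_nonneg (hd i) (hl₀s i hi)
          have hnum : l₀ y - ∑ i ∈ s, d i * l₀ (g i) < 0 := by linarith
          have hinv : (l₀ w)⁻¹ < 0 := inv_lt_zero.2 hw
          exact le_of_lt (mul_pos_of_neg_of_neg hinv hnum)
        have key : y = (∑ i ∈ s, d i • g i) + t • w := by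
          have h1 : ∑ i ∈ s, d i • π (g i)
              = (∑ i ∈ s, d i • g i) - (∑ i ∈ s, d i * ((l₀ w)⁻¹ * l₀ (g i))) • w := by
            rw [Finset.sum_smul, ← Finset.sum_sub_distrib]
            refine Finset.sum_congr rfl fun i hi => ?_
            rw [hπv, smul_sub, smul_smul]
          rw [hπv, h1] at hrep
          have h2 : y = (∑ i ∈ s, d i • g i)
              + (((l₀ w)⁻¹ * l₀ y) - ∑ i ∈ s, d i * ((l₀ w)⁻¹ * l₀ (g i))) • w := by
            have h3 := sub_eq_iff_eq_add.1 hrep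
            rw [sub_smul]
            conv_lhs => rw [h3]
            abel
          rw [h2]
          congr 1
          congr 1
          rw [ht, mul_sub, Finset.mul_sum, sub_right_inj]
          exact Finset.sum_congr rfl fun i _ => by ring
        refine ⟨fun i => if i = j then t else d i,
          fun i => by by_cases h : i = j <;> simp [h, htpos, hd i], ?_⟩
        rw [Finset.sum_insert hj]
        beta_reduce
        rw [if_pos rfl, key, add_comm]
        congr 1
        refine Finset.sum_congr rfl fun i hi => ?_
        have hij : i ≠ j := fun h => hj (h ▸ hi)
        beta_reduce
        rw [if_neg hij]
      obtain ⟨m, hms, hmy⟩ := ih (fun i => π (g i)) (π y) hproj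
      refine ⟨m.comp π, fun i hi => ?_, hmy⟩
      rcases Finset.mem_insert.1 hi with rfl | hi
      · show 0 ≤ m (π (g i)); rw [← hwdef, hπw, map_zero]
      · exact hms i hi

/-- Farkas lemma for finitely generated cones. -/
lemma farkas {T : Finset V} {y : V} (hy : y ∉ coneOf T) :
    ∃ l : Module.Dual ℝ V, (∀ v ∈ T, 0 ≤ l v) ∧ l y < 0 := by
  have h : ¬ ∃ c : V → ℝ, (∀ i, 0 ≤ c i) ∧ y = ∑ i ∈ T, c i • id i := by
    simpa [coneOf] using hy
  obtain ⟨l, h1, h2⟩ := farkas_fam T id y h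
  exact ⟨l, h1, h2⟩

/-! ### Faces of finitely generated cones -/

lemma face_subset {F C : Set V} (h : IsFaceOf F C) : F ⊆ C := by
  obtain ⟨l, -, rfl⟩ := h
  exact Set.inter_subset_left

lemma coneOf_inter_ker {T : Finset V} {l : Module.Dual ℝ V} (h : ∀ v ∈ T, 0 ≤ l v) :
    coneOf T ∩ {x | l x = 0} = coneOf (T.filter (fun v => l v = 0)) := by
  apply Set.eq_of_subset_of_subset
  · rintro x ⟨⟨c, hc, rfl⟩, hx0⟩
    simp only [Set.mem_setOf_eq, map_sum, map_smul, smul_eq_mul] at hx0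
    have hzero : ∀ v ∈ T, c v * l v = 0 := by
      rw [← Finset.sum_eq_zero_iff_of_nonneg (fun v hv => mul_nonneg (hc v) (h v hv))] at *
      exact hx0
    refine ⟨fun v => if l v = 0 then c v else 0,
      fun v => by by_cases hv : l v = 0 <;> simp [hv, hc v], ?_⟩
    rw [← Finset.sum_filter_add_sum_filter_not T (fun v => l v = 0)]
    have h2 : ∑ v ∈ T.filter (fun v => ¬ l v = 0), c v • v = 0 := by
      refine Finset.sum_eq_zero fun v hv => ?_
      rw [Finset.mem_filter] at hv
      have : c v = 0 := by
        rcases mul_eq_zero.1 (hzero v hv.1) with h' | h'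
        · exact h'
        · exact absurd h' hv.2
      rw [this, zero_smul]
    rw [h2, add_zero]
    refine Finset.sum_congr rfl fun v hv => ?_
    rw [Finset.mem_filter] at hv
    beta_reduce
    rw [if_pos hv.2]
  · intro x hx
    constructor
    · exact coneOf_mono (Finset.filter_subset _ _) hx
    · exact zero_on_coneOf (fun v hv => (Finset.mem_filter.1 hv).2) hx

lemma isFaceOf_coneOf_iff {T : Finset V} {F : Set V} :
    IsFaceOf F (coneOf T) ↔
      ∃ l : Module.Dual ℝ V, (∀ v ∈ T, 0 ≤ l v) ∧ F = coneOf (T.filter (fun v => l v = 0)) := by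
  constructor
  · rintro ⟨l, hl, rfl⟩
    rw [mem_dualCone_coneOf] at hl
    exact ⟨l, hl, coneOf_inter_ker hl⟩
  · rintro ⟨l, hl, rfl⟩
    exact ⟨l, mem_dualCone_coneOf.2 hl, (coneOf_inter_ker hl).symm⟩

noncomputable def faceFinset (T : Finset V) : Finset (Set V) :=
  (T.powerset.image coneOf).filter (fun F => IsFaceOf F (coneOf T))

lemma mem_faceFinset {T : Finset V} {F : Set V} :
    F ∈ faceFinset T ↔ IsFaceOf F (coneOf T) := by
  rw [faceFinset, Finset.mem_filter]
  constructor
  · exact fun h => h.2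
  · intro h
    refine ⟨?_, h⟩
    obtain ⟨l, -, rfl⟩ := isFaceOf_coneOf_iff.1 h
    exact Finset.mem_image.2 ⟨_, Finset.mem_powerset.2 (Finset.filter_subset _ _), rfl⟩

lemma face_set_eq_coe (T : Finset V) :
    {F : Set V | IsFaceOf F (coneOf T)} = ↑(faceFinset T) := by
  ext F; simp [mem_faceFinset]

lemma face_mem_iff_gen_zero {T : Finset V} {F : Set V} {l : Module.Dual ℝ V}
    (hl : ∀ v ∈ T, 0 ≤ l v) (hF : F = coneOf (T.filter (fun v => l v = 0)))
    {v : V} (hv : v ∈ T) : v ∈ F ↔ l v = 0 := by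
  constructor
  · intro hvF
    rw [hF] at hvF
    exact zero_on_coneOf (fun u hu => (Finset.mem_filter.1 hu).2) hvF
  · intro h0
    rw [hF]
    exact mem_coneOf_self (Finset.mem_filter.2 ⟨hv, h0⟩)

lemma face_gens {T : Finset V} {F : Set V} (h : IsFaceOf F (coneOf T)) :
    F = coneOf (T.filter (fun v => v ∈ F)) := by
  obtain ⟨l, hl, hF⟩ := isFaceOf_coneOf_iff.1 h
  have heq : T.filter (fun v => v ∈ F) = T.filter (fun v => l v = 0) :=
    Finset.filter_congr fun v hv => by
      constructor
      · exact fun hvF => (face_mem_iff_gen_zero hl hF hv).1 hvF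
      · exact fun h0 => (face_mem_iff_gen_zero hl hF hv).2 h0
  rw [heq, ← hF]

lemma face_inter_span {T : Finset V} {G : Set V} (h : IsFaceOf G (coneOf T)) :
    coneOf T ∩ (Submodule.span ℝ G : Set V) = G := by
  obtain ⟨l, hl, rfl⟩ := h
  apply Set.eq_of_subset_of_subset
  · rintro x ⟨hxC, hxs⟩
    refine ⟨hxC, ?_⟩
    have hsub : Submodule.span ℝ (coneOf T ∩ {x | l x = 0}) ≤ LinearMap.ker l :=
      Submodule.span_le.2 (fun y hy => hy.2)
    exact hsub hxs
  · intro x hx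
    exact ⟨hx.1, Submodule.subset_span hx⟩

/-- choice of a uniform ε making finitely many strict inequalities robust -/
lemma exists_eps {ι : Type*} (s : Finset ι) (a b : ι → ℝ) (ha : ∀ i ∈ s, 0 < a i) :
    ∃ ε : ℝ, 0 < ε ∧ ∀ ε' : ℝ, 0 < ε' → ε' ≤ ε → ∀ i ∈ s, 0 < a i + ε' * b i := by
  classical
  induction s using Finset.induction with
  | empty => exact ⟨1, one_pos, fun _ _ _ i hi => absurd hi (Finset.notMem_empty i)⟩
  | @insert j s hj ih =>
    obtain ⟨ε₀, hε₀, h₀⟩ := ih (fun i hi => ha i (Finset.mem_insert_of_mem hi))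
    have haj : 0 < a j := ha j (Finset.mem_insert_self j s)
    by_cases hbj : 0 ≤ b j
    · refine ⟨ε₀, hε₀, fun ε' hε' hle i hi => ?_⟩
      rcases Finset.mem_insert.1 hi with rfl | hi
      · have : 0 ≤ ε' * b i := mul_nonneg hε'.le hbj
        linarith
      · exact h₀ ε' hε' hle i hi
    · push_neg at hbj
      refine ⟨min ε₀ (a j / (2 * (-(b j)))), lt_min hε₀ (div_pos haj (by linarith)),
        fun ε' hε' hle i hi => ?_⟩
      rcases Finset.mem_insert.1 hi with rfl | hi
      · have hnb : 0 < -b i := by linarith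
        have h1 : ε' ≤ a i / (2 * (-(b i))) := le_trans hle (min_le_right _ _)
        have h2 : ε' * (-(b i)) ≤ a i / 2 := by
          have h3 := mul_le_mul_of_nonneg_right h1 hnb.le
          have h4 : a i / (2 * (-(b i))) * (-(b i)) = a i / 2 := by
            rw [div_mul_eq_mul_div, mul_comm (2:ℝ) (-(b i)), mul_comm (a i) (-(b i)),
              mul_div_mul_left _ _ (ne_of_gt hnb)]
          rw [h4] at h3
          exact h3
        have h5 : ε' * b i = -(ε' * (-(b i))) := by ring
        rw [h5]
        linarith
      · exact h₀ ε' hε' (le_trans hle (min_le_left _ _)) i hi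

/-- a face cut by a functional nonnegative on it is again a face of the big cone -/
lemma face_transitive {T : Finset V} {F : Set V} (h : IsFaceOf F (coneOf T))
    {m : Module.Dual ℝ V} (hm : ∀ x ∈ F, 0 ≤ m x) :
    IsFaceOf (F ∩ {x | m x = 0}) (coneOf T) := by
  obtain ⟨l, hl, hF⟩ := isFaceOf_coneOf_iff.1 h
  obtain ⟨ε, hε, hεgood⟩ := exists_eps (T.filter (fun v => 0 < l v)) l m
    (fun v hv => (Finset.mem_filter.1 hv).2)
  have hεT : ∀ v ∈ T, 0 < l v → 0 < l v + ε * m v := by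
    intro v hv hlv
    exact hεgood ε hε le_rfl v (Finset.mem_filter.2 ⟨hv, hlv⟩)
  set l' : Module.Dual ℝ V := l + ε • m with hl'
  have hl'v : ∀ v, l' v = l v + ε * m v := fun v => rfl
  have hmT : ∀ v ∈ T, l v = 0 → 0 ≤ m v := by
    intro v hv h0
    exact hm v ((face_mem_iff_gen_zero hl hF hv).2 h0)
  have hl'pos : ∀ v ∈ T, 0 ≤ l' v := by
    intro v hv
    rw [hl'v]
    rcases (hl v hv).lt_or_eq with hlt | heq
    · exact (hεT v hv hlt).le
    · rw [← heq, zero_add]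
      exact mul_nonneg hε.le (hmT v hv heq.symm)
  have hfil : T.filter (fun v => l' v = 0) = (T.filter (fun v => l v = 0)).filter
      (fun v => m v = 0) := by
    rw [Finset.filter_filter]
    refine Finset.filter_congr fun v hv => ?_
    rw [hl'v]
    constructor
    · intro h0
      rcases (hl v hv).lt_or_eq with hlt | heq
      · exact absurd h0 (ne_of_gt (hεT v hv hlt))
      · refine ⟨heq.symm, ?_⟩
        have := hmT v hv heq.symm
        rw [← heq, zero_add] at h0
        rcases mul_eq_zero.1 h0 with h' | h'
        · exact absurd h' (ne_of_gt hε)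
        · exact h'
    · rintro ⟨h1, h2⟩
      rw [h1, h2, mul_zero, add_zero]
  refine isFaceOf_coneOf_iff.2 ⟨l', hl'pos, ?_⟩
  rw [hfil, ← coneOf_inter_ker (fun v hv => hmT v (Finset.mem_filter.1 hv).1
    (Finset.mem_filter.1 hv).2), ← hF]

/-- the cone plus the span of a face, as a finitely generated cone -/
lemma cone_add_span_face {T : Finset V} {F : Set V} (h : IsFaceOf F (coneOf T)) :
    coneOf T + (Submodule.span ℝ F : Set V)
      = coneOf (T ∪ ((T.filter (fun v => v ∈ F)) ∪
          (T.filter (fun v => v ∈ F)).image (fun v => -v))) := by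
  have hspan : Submodule.span ℝ F
      = Submodule.span ℝ ((T.filter (fun v => v ∈ F) : Finset V) : Set V) := by
    conv_lhs => rw [face_gens h]
    rw [span_coneOf]
  rw [hspan, span_eq_coneOf_union_neg, ← coneOf_union]

/-! ### Genericity -/

lemma exists_dual_avoiding [FiniteDimensional ℝ V] (U : Submodule ℝ V) (s : Finset V)
    (hs : ∀ w ∈ s, w ∉ U) :
    ∃ θ : Module.Dual ℝ V, (∀ x ∈ U, θ x = 0) ∧ ∀ w ∈ s, θ w ≠ 0 := by
  classical
  induction s using Finset.induction with
  | empty => exact ⟨0, fun x _ => rfl, fun w hw => absurd hw (Finset.notMem_empty w)⟩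
  | @insert w s hw ih =>
    obtain ⟨θ₀, hθ₀U, hθ₀s⟩ := ih (fun w' hw' => hs w' (Finset.mem_insert_of_mem hw'))
    have hwU : w ∉ U := hs w (Finset.mem_insert_self w s)
    obtain ⟨θ₁, hθ₁U, hθ₁w⟩ : ∃ θ₁ : Module.Dual ℝ V, (∀ x ∈ U, θ₁ x = 0) ∧ θ₁ w ≠ 0 := by
      have hq : U.mkQ w ≠ 0 := by
        rw [Submodule.mkQ_apply, ne_eq, Submodule.Quotient.mk_eq_zero]
        exact hwU
      have h1 := (Module.forall_dual_apply_eq_zero_iff ℝ (U.mkQ w)).not.2 hq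
      push_neg at h1
      obtain ⟨φ, hφ⟩ := h1
      refine ⟨φ.comp U.mkQ, fun x hx => ?_, hφ⟩
      simp [Submodule.Quotient.mk_eq_zero U |>.2 hx]
    set bad : Finset ℝ := (insert w s).image (fun w' => -(θ₀ w') / θ₁ w') with hbad
    obtain ⟨c, hc⟩ := Infinite.exists_notMem_finset bad
    refine ⟨θ₀ + c • θ₁, fun x hx => by simp [hθ₀U x hx, hθ₁U x hx], ?_⟩
    intro w' hw'
    have hkey : ∀ w'' ∈ insert w s, θ₁ w'' ≠ 0 → θ₀ w'' + c * θ₁ w'' ≠ 0 := by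
      intro w'' hw'' h1 h0
      apply hc
      rw [hbad]
      refine Finset.mem_image.2 ⟨w'', hw'', ?_⟩
      field_simp
      linarith
    rcases Finset.mem_insert.1 hw' with rfl | hw'
    · exact fun h0 => hkey w' (Finset.mem_insert_self w' s) hθ₁w (by simpa using h0)
    · intro h0
      by_cases h1 : θ₁ w' = 0
      · simp only [LinearMap.add_apply, LinearMap.smul_apply, smul_eq_mul, h1, mul_zero,
          add_zero] at h0
        exact hθ₀s w' hw' h0
      · exact hkey w' (Finset.mem_insert_of_mem hw') h1 (by simpa using h0)

lemma exists_generic [FiniteDimensional ℝ V] (T : Finset V) (lam l₀ : Module.Dual ℝ V)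
    (G : Set V)
    (hl₀pos : ∀ u ∈ T, u ∉ G → 0 < l₀ u) (hl₀G : ∀ x ∈ G, l₀ x = 0) :
    ∃ ν : Module.Dual ℝ V, (∀ x ∈ Submodule.span ℝ G, ν x = 0)
      ∧ (∀ u ∈ T, u ∉ G → 0 < ν u)
      ∧ (∀ u ∈ T, ∀ u' ∈ T, 0 < lam u → 0 < lam u' →
          lam u * ν u' = lam u' * ν u →
          lam u • u' - lam u' • u ∈ Submodule.span ℝ G) := by
  classical
  set U := Submodule.span ℝ G with hU
  set P : Finset (V × V) := (T ×ˢ T).filter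
    (fun p => 0 < lam p.1 ∧ 0 < lam p.2 ∧ lam p.1 • p.2 - lam p.2 • p.1 ∉ U) with hP
  set sbad : Finset V := P.image (fun p => lam p.1 • p.2 - lam p.2 • p.1) with hsbad
  have hsbadU : ∀ v ∈ sbad, v ∉ U := by
    intro v hv
    rw [hsbad] at hv
    obtain ⟨p, hp, rfl⟩ := Finset.mem_image.1 hv
    exact ((Finset.mem_filter.1 hp).2).2.2
  obtain ⟨θ, hθU, hθbad⟩ := exists_dual_avoiding U sbad hsbadU
  obtain ⟨ε₁, hε₁, hε₁good⟩ := exists_eps (T.filter (fun u => u ∉ G)) l₀ θ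
    (fun u hu => hl₀pos u (Finset.mem_filter.1 hu).1 (Finset.mem_filter.1 hu).2)
  set badF : Finset ℝ := P.image
    (fun p => -(lam p.1 * l₀ p.2 - lam p.2 * l₀ p.1)
      / (lam p.1 * θ p.2 - lam p.2 * θ p.1)) with hbadF
  have hIoo : (Set.Ioo (0:ℝ) ε₁).Infinite := Set.Ioo_infinite hε₁
  obtain ⟨ε, hε⟩ := (hIoo.diff badF.finite_toSet).nonempty
  obtain ⟨⟨hε0, hεlt⟩, hεbad⟩ := hε
  refine ⟨l₀ + ε • θ, ?_, ?_, ?_⟩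
  · intro x hx
    have h1 : l₀ x = 0 := zero_on_span hl₀G x hx
    have h2 : θ x = 0 := hθU x hx
    simp [h1, h2]
  · intro u hu huG
    have := hε₁good ε hε0 hεlt.le u (Finset.mem_filter.2 ⟨hu, huG⟩)
    simpa using this
  · intro u hu u' hu' hlu hlu' heq
    by_contra hnot
    have hpP : (u, u') ∈ P := Finset.mem_filter.2
      ⟨Finset.mem_product.2 ⟨hu, hu'⟩, hlu, hlu', hnot⟩
    have hB : lam u * θ u' - lam u' * θ u ≠ 0 := by
      have h1 : θ (lam u • u' - lam u' • u) ≠ 0 :=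
        hθbad _ (Finset.mem_image.2 ⟨(u, u'), hpP, rfl⟩)
      simpa [map_sub, map_smul, mul_comm] using h1
    apply hεbad
    rw [hbadF]
    refine Finset.mem_image.2 ⟨(u, u'), hpP, ?_⟩
    simp only [LinearMap.add_apply, LinearMap.smul_apply, smul_eq_mul] at heq
    field_simp
    ring_nf
    ring_nf at heq
    linarith

/-! ### The Omega relation: setup and easy cases -/

/-- the fibered face sum -/
noncomputable def Nsum (T : Finset V) (lam : Module.Dual ℝ V) (G : Set V) : ℤ :=
  ∑ F ∈ (faceFinset T).filter
      (fun F => (∀ x ∈ F, 0 ≤ lam x) ∧ F ∩ {x | lam x = 0} = G), (-1 : ℤ) ^ sdim F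

/-- the predicted value -/
noncomputable def Nval (T : Finset V) (lam : Module.Dual ℝ V) (G : Set V) : ℤ :=
  if IsFaceOf G (coneOf T) ∧ (∀ x ∈ G, lam x = 0) ∧ (∀ v ∈ T, lam v ≤ 0)
  then (-1 : ℤ) ^ sdim G else 0

lemma omega_easy {T : Finset V} {lam : Module.Dual ℝ V} {G : Set V}
    (h : ¬ (IsFaceOf G (coneOf T) ∧ ∀ x ∈ G, lam x = 0)) :
    Nsum T lam G = 0 ∧ Nval T lam G = 0 := by
  constructor
  · rw [Nsum]
    refine Finset.sum_eq_zero fun F hF => ?_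
    exfalso
    rw [Finset.mem_filter] at hF
    obtain ⟨hFface, hFpos, hFG⟩ := hF
    refine h ⟨hFG ▸ face_transitive (mem_faceFinset.1 hFface) hFpos, ?_⟩
    intro x hx
    rw [← hFG] at hx
    exact hx.2
  · rw [Nval, if_neg]
    rintro ⟨h1, h2, -⟩
    exact h ⟨h1, h2⟩

lemma zero_on_face_of_subset {G : Set V} {lam : Module.Dual ℝ V}
    (hG : ∀ x ∈ G, lam x = 0) : G ⊆ {x | lam x = 0} := fun x hx => hG x hx

lemma omega_neg {T : Finset V} {lam : Module.Dual ℝ V} {G : Set V}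
    (hneg : ∀ v ∈ T, lam v ≤ 0) :
    Nsum T lam G = Nval T lam G := by
  by_cases hfz : IsFaceOf G (coneOf T) ∧ ∀ x ∈ G, lam x = 0
  · have hfilter : (faceFinset T).filter
        (fun F => (∀ x ∈ F, 0 ≤ lam x) ∧ F ∩ {x | lam x = 0} = G) = {G} := by
      apply Finset.eq_singleton_iff_unique_mem.2
      constructor
      · rw [Finset.mem_filter]
        refine ⟨mem_faceFinset.2 hfz.1, fun x hx => le_of_eq (hfz.2 x hx).symm, ?_⟩
        rw [Set.inter_eq_left.2 (zero_on_face_of_subset hfz.2)]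
      · intro F hF
        rw [Finset.mem_filter] at hF
        obtain ⟨hFface, hFpos, hFG⟩ := hF
        have hFneg : ∀ x ∈ F, lam x ≤ 0 := by
          intro x hx
          have hxC : x ∈ coneOf T := face_subset (mem_faceFinset.1 hFface) hx
          have : 0 ≤ (-lam) x := nonneg_on_coneOf (fun v hv => by
            simpa using hneg v hv) hxC
          simpa using this
        have : F ⊆ {x | lam x = 0} := fun x hx =>
          le_antisymm (hFneg x hx) (hFpos x hx)
        rw [← hFG, Set.inter_eq_left.2 this]
    rw [Nsum, hfilter, Finset.sum_singleton, Nval, if_pos ⟨hfz.1, hfz.2, hneg⟩]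
  · obtain ⟨h1, h2⟩ := omega_easy hfz
    rw [h1, h2]

/-! ### dimension helpers -/

lemma finrank_sup_singleton [FiniteDimensional ℝ V] {U : Submodule ℝ V} {u : V} (hu : u ∉ U) :
    Module.finrank ℝ ↥(U ⊔ Submodule.span ℝ {u}) = Module.finrank ℝ ↥U + 1 := by
  have hu0 : u ≠ 0 := fun h => hu (h ▸ U.zero_mem)
  have hinf : U ⊓ Submodule.span ℝ {u} = ⊥ := by
    rw [eq_bot_iff]
    rintro x ⟨hxU, hxu⟩
    obtain ⟨t, rfl⟩ := Submodule.mem_span_singleton.1 hxu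
    rcases eq_or_ne t 0 with rfl | ht
    · simp
    · exfalso
      exact hu (by simpa [smul_smul, inv_mul_cancel₀ ht] using U.smul_mem t⁻¹ hxU)
  have := Submodule.finrank_sup_add_finrank_inf_eq U (Submodule.span ℝ {u})
  rw [hinf, finrank_span_singleton hu0] at this
  simpa using this

lemma mem_span_sup_of_cross {G : Set V} {u₀ v : V} {a b : ℝ}
    (hcross : a • u₀ - b • v ∈ Submodule.span ℝ G) (hb : b ≠ 0) :
    v ∈ Submodule.span ℝ G ⊔ Submodule.span ℝ {u₀} := by
  have h1 : b • v = a • u₀ - (a • u₀ - b • v) := by abel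
  have h2 : b • v ∈ Submodule.span ℝ G ⊔ Submodule.span ℝ {u₀} := by
    rw [h1]
    refine Submodule.sub_mem _ ?_ ?_
    · exact Submodule.mem_sup_right (Submodule.smul_mem _ _ (Submodule.mem_span_singleton_self u₀))
    · exact Submodule.mem_sup_left hcross
  have h3 := Submodule.smul_mem _ b⁻¹ h2
  rwa [smul_smul, inv_mul_cancel₀ hb, one_smul] at h3

lemma span_face_eq_sup [FiniteDimensional ℝ V] {T : Finset V} {G ρ : Set V} {u₀ : V}
    (hρ : IsFaceOf ρ (coneOf T)) (hGρ : G ⊆ ρ) (hu₀ρ : u₀ ∈ ρ)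
    (hu₀ : u₀ ∉ Submodule.span ℝ G)
    (hdim : sdim ρ = sdim G + 1) :
    Submodule.span ℝ ρ = Submodule.span ℝ G ⊔ Submodule.span ℝ {u₀} := by
  have hle : Submodule.span ℝ G ⊔ Submodule.span ℝ {u₀} ≤ Submodule.span ℝ ρ := by
    refine sup_le (Submodule.span_mono hGρ) ?_
    rw [Submodule.span_le, Set.singleton_subset_iff]
    exact Submodule.subset_span hu₀ρ
  have hrank : Module.finrank ℝ ↥(Submodule.span ℝ ρ)
      ≤ Module.finrank ℝ ↥(Submodule.span ℝ G ⊔ Submodule.span ℝ {u₀}) := by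
    rw [finrank_sup_singleton hu₀]
    rw [sdim] at hdim
    rw [hdim]
    rfl
  exact (Submodule.eq_of_le_of_finrank_le hle hrank).symm

lemma sdim_succ_of [FiniteDimensional ℝ V] {T : Finset V} {G ρ : Set V} {u₀ : V}
    (hρ : IsFaceOf ρ (coneOf T)) (hGρ : G ⊆ ρ) (hu₀ρ : u₀ ∈ ρ)
    (hu₀ : u₀ ∉ Submodule.span ℝ G)
    (hspan : ∀ v ∈ T, v ∈ ρ → v ∈ Submodule.span ℝ G ⊔ Submodule.span ℝ {u₀}) :
    sdim ρ = sdim G + 1 := by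
  have h1 : Submodule.span ℝ ρ = Submodule.span ℝ G ⊔ Submodule.span ℝ {u₀} := by
    apply le_antisymm
    · conv_lhs => rw [face_gens hρ, span_coneOf]
      rw [Submodule.span_le]
      intro v hv
      rw [Finset.coe_filter, Set.mem_setOf_eq] at hv
      exact hspan v hv.1 hv.2
    · refine sup_le (Submodule.span_mono hGρ) ?_
      rw [Submodule.span_le, Set.singleton_subset_iff]
      exact Submodule.subset_span hu₀ρ
  rw [sdim, sdim, h1, finrank_sup_singleton hu₀]

/-! ### The sweep: positive case of the Omega relation -/

lemma omega_sweep [FiniteDimensional ℝ V] {T : Finset V} {lam : Module.Dual ℝ V} {G : Set V}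
    (hGf : IsFaceOf G (coneOf T)) (hGz : ∀ x ∈ G, lam x = 0)
    {w₀ : V} (hw₀T : w₀ ∈ T) (hw₀pos : 0 < lam w₀)
    (IH : ∀ (lam' : Module.Dual ℝ V) (G' : Set V), IsFaceOf G' (coneOf T) →
        sdim G' = sdim G + 1 → Nsum T lam' G' = Nval T lam' G') :
    Nsum T lam G = 0 := by
  classical
  obtain ⟨l₀, hl₀T, hGrep⟩ := isFaceOf_coneOf_iff.1 hGf
  have hl₀mem : ∀ u ∈ T, (u ∈ G ↔ l₀ u = 0) := fun u hu => face_mem_iff_gen_zero hl₀T hGrep hu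
  have hl₀pos : ∀ u ∈ T, u ∉ G → 0 < l₀ u := fun u hu huG =>
    (hl₀T u hu).lt_of_ne (fun h => huG ((hl₀mem u hu).2 h.symm))
  have hl₀G : ∀ x ∈ G, l₀ x = 0 := by
    intro x hx
    rw [hGrep] at hx
    exact zero_on_coneOf (fun v hv => (Finset.mem_filter.1 hv).2) hx
  obtain ⟨ν, hνspan, hνpos, hνgen⟩ := exists_generic T lam l₀ G hl₀pos hl₀G
  have hνG : ∀ x ∈ G, ν x = 0 := fun x hx => hνspan x (Submodule.subset_span hx)
  have hlamspan : ∀ x ∈ Submodule.span ℝ G, lam x = 0 := zero_on_span hGz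
  have hl₀span : ∀ x ∈ Submodule.span ℝ G, l₀ x = 0 := zero_on_span hl₀G
  have hνT : ∀ v ∈ T, 0 ≤ ν v := by
    intro v hv
    by_cases hvG : v ∈ G
    · rw [hνG v hvG]
    · exact (hνpos v hv hvG).le
  -- membership of generators in spans of faces
  have hnotspan : ∀ u ∈ T, u ∉ G → u ∉ Submodule.span ℝ G := by
    intro u hu huG hmem
    exact huG (by rw [← face_inter_span hGf]; exact ⟨mem_coneOf_self hu, hmem⟩)
  -- positivity of lam on off-G elements of faces in the fiber
  have hposF : ∀ F : Set V, (∀ x ∈ F, 0 ≤ lam x) → F ∩ {x | lam x = 0} = G →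
      ∀ v, v ∈ F → v ∉ G → 0 < lam v := by
    intro F hFpos hFG v hvF hvG
    rcases (hFpos v hvF).lt_or_eq with h | h
    · exact h
    · exact absurd (hFG ▸ (⟨hvF, h.symm⟩ : v ∈ F ∩ {x | lam x = 0})) hvG
  -- the ratio-rigidity along (sdim G + 1)-faces
  have hratio : ∀ ρ : Set V, IsFaceOf ρ (coneOf T) → G ⊆ ρ → sdim ρ = sdim G + 1 →
      ∀ u ∈ T, u ∈ ρ → u ∉ G → ∀ u' ∈ T, u' ∈ ρ → u' ∉ G →
      lam u' * ν u = lam u * ν u' := by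
    intro ρ hρf hGρ hdim u hu huρ huG u' hu' hu'ρ hu'G
    have huspan : u ∉ Submodule.span ℝ G := hnotspan u hu huG
    have hsp := span_face_eq_sup hρf hGρ huρ huspan hdim
    have hu'mem : u' ∈ Submodule.span ℝ G ⊔ Submodule.span ℝ {u} := by
      rw [← hsp]; exact Submodule.subset_span hu'ρ
    obtain ⟨g, hg, z, hz, hsum⟩ := Submodule.mem_sup.1 hu'mem
    obtain ⟨t, rfl⟩ := Submodule.mem_span_singleton.1 hz
    have hlam' : lam u' = t * lam u := by
      rw [← hsum, map_add, map_smul, hlamspan g hg, zero_add, smul_eq_mul]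
    have hν' : ν u' = t * ν u := by
      rw [← hsum, map_add, map_smul, hνspan g hg, zero_add, smul_eq_mul]
    rw [hlam', hν']; ring
  -- the minimal-ratio value of a face
  set SS : Set V → Finset V := fun F => T.filter (fun v => v ∈ F ∧ v ∉ G) with hSS
  set cv : Set V → ℝ := fun F =>
    if h : (SS F).Nonempty then ((SS F).image (fun u => lam u / ν u)).min' (h.image _)
    else 0 with hcv
  have hSSmem : ∀ {F : Set V} {v : V}, v ∈ SS F ↔ (v ∈ T ∧ v ∈ F ∧ v ∉ G) := by
    intro F v
    rw [hSS]
    beta_reduce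
    rw [Finset.mem_filter]
  have hcw : ∀ F : Set V, (SS F).Nonempty →
      (∃ u₁ ∈ SS F, lam u₁ / ν u₁ = cv F) ∧ ∀ u ∈ SS F, cv F ≤ lam u / ν u := by
    intro F hne
    have hval : cv F = ((SS F).image (fun u => lam u / ν u)).min' (hne.image _) := by
      rw [hcv]; beta_reduce; rw [dif_pos hne]
    constructor
    · have hmem := Finset.min'_mem ((SS F).image (fun u => lam u / ν u)) (hne.image _)
      rw [Finset.mem_image] at hmem
      obtain ⟨u₁, hu₁, hu₁r⟩ := hmem
      exact ⟨u₁, hu₁, by rw [hval]; exact hu₁r⟩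
    · intro u hu
      rw [hval]
      exact Finset.min'_le _ _ (Finset.mem_image_of_mem _ hu)
  -- nonemptiness of SS on faces strictly above G
  have hSSne : ∀ F : Set V, IsFaceOf F (coneOf T) → G ⊆ F → F ≠ G → (SS F).Nonempty := by
    intro F hFf hGF hne
    by_contra hemp
    rw [Finset.not_nonempty_iff_eq_empty] at hemp
    apply hne
    refine Set.eq_of_subset_of_subset ?_ hGF
    conv_lhs => rw [face_gens hFf]
    have hsub : ∀ v ∈ T.filter (fun v => v ∈ F), v ∈ coneOf (T.filter (fun v => l₀ v = 0)) := by
      intro v hv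
      rw [Finset.mem_filter] at hv
      by_contra hvG
      have hvG' : v ∉ G := by rw [hGrep]; exact hvG
      have : v ∈ SS F := hSSmem.2 ⟨hv.1, hv.2, hvG'⟩
      rw [hemp] at this
      exact absurd this (Finset.notMem_empty v)
    intro x hx
    rw [hGrep]
    exact coneOf_subset_coneOf hsub hx
  set kerS : Set V := {x | lam x = 0} with hkerS
  set FF := (faceFinset T).filter (fun F => (∀ x ∈ F, 0 ≤ lam x) ∧ F ∩ kerS = G) with hFF
  have hGFF : G ∈ FF := by
    rw [hFF, Finset.mem_filter]
    exact ⟨mem_faceFinset.2 hGf, fun x hx => le_of_eq (hGz x hx).symm,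
      Set.inter_eq_left.2 (fun x hx => hGz x hx)⟩
  set Rset := (faceFinset T).filter
      (fun ρ => (∀ x ∈ ρ, 0 ≤ lam x) ∧ ρ ∩ kerS = G ∧ sdim ρ = sdim G + 1) with hRset
  -- main per-face construction
  have hFmain : ∀ F ∈ FF.erase G,
      (∀ x ∈ F, 0 ≤ (lam - cv F • ν) x) ∧
      IsFaceOf (F ∩ {x | (lam - cv F • ν) x = 0}) (coneOf T) ∧
      (∀ x ∈ F ∩ {x | (lam - cv F • ν) x = 0}, 0 ≤ lam x) ∧
      (F ∩ {x | (lam - cv F • ν) x = 0}) ∩ kerS = G ∧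
      sdim (F ∩ {x | (lam - cv F • ν) x = 0}) = sdim G + 1 := by
    intro F hFmem
    rw [Finset.mem_erase, hFF, Finset.mem_filter] at hFmem
    obtain ⟨hne, hFface', hFpos, hFG⟩ := hFmem
    have hFf := mem_faceFinset.1 hFface'
    have hGF : G ⊆ F := by rw [← hFG]; exact Set.inter_subset_left
    have hne' := hSSne F hFf hGF hne
    obtain ⟨⟨u₁, hu₁SS, hu₁r⟩, hmin⟩ := hcw F hne'
    obtain ⟨hu₁T, hu₁F, hu₁G⟩ := hSSmem.1 hu₁SS
    have hlmu₁ : 0 < lam u₁ := hposF F hFpos hFG u₁ hu₁F hu₁G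
    have hνu₁ : 0 < ν u₁ := hνpos u₁ hu₁T hu₁G
    have hc : 0 < cv F := by rw [← hu₁r]; exact div_pos hlmu₁ hνu₁
    have hμgens : ∀ v ∈ T, v ∈ F → 0 ≤ (lam - cv F • ν) v := by
      intro v hv hvF
      rw [LinearMap.sub_apply, LinearMap.smul_apply, smul_eq_mul, sub_nonneg]
      by_cases hvG : v ∈ G
      · rw [hGz v hvG, hνG v hvG, mul_zero]
      · have h1 : cv F ≤ lam v / ν v := hmin v (hSSmem.2 ⟨hv, hvF, hvG⟩)
        have h2 : 0 < ν v := hνpos v hv hvG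
        rwa [le_div_iff₀ h2] at h1
    have hμF : ∀ x ∈ F, 0 ≤ (lam - cv F • ν) x := by
      intro x hx
      rw [face_gens hFf] at hx
      exact nonneg_on_coneOf
        (fun v hv => hμgens v (Finset.mem_filter.1 hv).1 (Finset.mem_filter.1 hv).2) hx
    have hggf : IsFaceOf (F ∩ {x | (lam - cv F • ν) x = 0}) (coneOf T) :=
      face_transitive hFf hμF
    have hμu₁ : (lam - cv F • ν) u₁ = 0 := by
      rw [LinearMap.sub_apply, LinearMap.smul_apply, smul_eq_mul, sub_eq_zero, ← hu₁r,
        div_mul_cancel₀ _ (ne_of_gt hνu₁)]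
    have hu₁gg : u₁ ∈ F ∩ {x | (lam - cv F • ν) x = 0} := ⟨hu₁F, hμu₁⟩
    have hGgg : G ⊆ F ∩ {x | (lam - cv F • ν) x = 0} := by
      intro x hx
      refine ⟨hGF hx, ?_⟩
      show (lam - cv F • ν) x = 0
      rw [LinearMap.sub_apply, LinearMap.smul_apply, smul_eq_mul, hGz x hx, hνG x hx,
        mul_zero, sub_zero]
    refine ⟨hμF, hggf, fun x hx => hFpos x hx.1, ?_, ?_⟩
    · apply Set.eq_of_subset_of_subset
      · intro x hx
        rw [← hFG]
        exact ⟨hx.1.1, hx.2⟩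
      · intro x hx
        exact ⟨hGgg hx, hGz x hx⟩
    · refine sdim_succ_of hggf hGgg hu₁gg (hnotspan u₁ hu₁T hu₁G) ?_
      intro v hv hvgg
      by_cases hvG : v ∈ G
      · exact Submodule.mem_sup_left (Submodule.subset_span hvG)
      · have hlmv : 0 < lam v := hposF F hFpos hFG v hvgg.1 hvG
        have hνv : 0 < ν v := hνpos v hv hvG
        have hμv : lam v = cv F * ν v := by
          have := hvgg.2
          rw [Set.mem_setOf_eq, LinearMap.sub_apply, LinearMap.smul_apply, smul_eq_mul,
            sub_eq_zero] at this
          exact this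
        have hμ1 : lam u₁ = cv F * ν u₁ := by
          rw [← hu₁r, div_mul_cancel₀ _ (ne_of_gt hνu₁)]
        have hcross : lam v * ν u₁ = lam u₁ * ν v := by rw [hμv, hμ1]; ring
        have hw := hνgen v hv u₁ hu₁T hlmv hlmu₁ hcross
        exact mem_span_sup_of_cross hw (ne_of_gt hlmu₁)
  have hmapsto : ∀ F ∈ FF.erase G, (F ∩ {x | (lam - cv F • ν) x = 0}) ∈ Rset := by
    intro F hF
    obtain ⟨h1, h2, h3, h4, h5⟩ := hFmain F hF
    rw [hRset, Finset.mem_filter]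
    exact ⟨mem_faceFinset.2 h2, h3, h4, h5⟩
  -- per-ρ facts
  have hRfacts : ∀ ρ ∈ Rset, IsFaceOf ρ (coneOf T) ∧ (∀ x ∈ ρ, 0 ≤ lam x) ∧
      ρ ∩ kerS = G ∧ sdim ρ = sdim G + 1 ∧ G ⊆ ρ ∧ ρ ≠ G ∧
      (∃ uρ, uρ ∈ T ∧ uρ ∈ ρ ∧ uρ ∉ G ∧ 0 < lam uρ ∧ lam uρ / ν uρ = cv ρ) ∧
      (∀ u ∈ T, u ∈ ρ → u ∉ G → lam u = cv ρ * ν u) ∧ 0 < cv ρ := by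
    intro ρ hρmem
    rw [hRset, Finset.mem_filter] at hρmem
    obtain ⟨hρface', hρpos, hρG, hρdim⟩ := hρmem
    have hρf := mem_faceFinset.1 hρface'
    have hGρ : G ⊆ ρ := by rw [← hρG]; exact Set.inter_subset_left
    have hρne : ρ ≠ G := by
      intro h
      rw [h] at hρdim
      omega
    have hρSSne := hSSne ρ hρf hGρ hρne
    obtain ⟨⟨uρ, huρSS, huρr⟩, hρmin⟩ := hcw ρ hρSSne
    obtain ⟨huρT, huρρ, huρG⟩ := hSSmem.1 huρSS
    have hlmuρ : 0 < lam uρ := hposF ρ hρpos hρG uρ huρρ huρG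
    have hνuρ : 0 < ν uρ := hνpos uρ huρT huρG
    have hcρ : 0 < cv ρ := by rw [← huρr]; exact div_pos hlmuρ hνuρ
    have hconst : ∀ u ∈ T, u ∈ ρ → u ∉ G → lam u = cv ρ * ν u := by
      intro u hu huρ' huG
      have hcross := hratio ρ hρf hGρ hρdim uρ huρT huρρ huρG u hu huρ' huG
      -- lam u * ν uρ = lam uρ * ν u
      have hν : ν uρ ≠ 0 := ne_of_gt hνuρ
      rw [← huρr]
      field_simp
      linarith [hcross]
    exact ⟨hρf, hρpos, hρG, hρdim, hGρ, hρne,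
      ⟨uρ, huρT, huρρ, huρG, hlmuρ, huρr⟩, hconst, hcρ⟩
  -- fiber identification
  have hfibeq : ∀ ρ ∈ Rset,
      (FF.erase G).filter (fun F => F ∩ {x | (lam - cv F • ν) x = 0} = ρ)
      = (faceFinset T).filter
          (fun F => (∀ x ∈ F, 0 ≤ (lam - cv ρ • ν) x)
            ∧ F ∩ {x | (lam - cv ρ • ν) x = 0} = ρ) := by
    intro ρ hρmem
    obtain ⟨hρf, hρpos, hρG, hρdim, hGρ, hρne, ⟨uρ, huρT, huρρ, huρG, hlmuρ, huρr⟩,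
      hconst, hcρ⟩ := hRfacts ρ hρmem
    have hνuρ : 0 < ν uρ := hνpos uρ huρT huρG
    have hμρzero : ∀ x ∈ ρ, (lam - cv ρ • ν) x = 0 := by
      intro x hx
      rw [face_gens hρf] at hx
      refine zero_on_coneOf (fun v hv => ?_) hx
      rw [Finset.mem_filter] at hv
      rw [LinearMap.sub_apply, LinearMap.smul_apply, smul_eq_mul, sub_eq_zero]
      by_cases hvG : v ∈ G
      · rw [hGz v hvG, hνG v hvG, mul_zero]
      · exact hconst v hv.1 hv.2 hvG
    apply Finset.ext
    intro F
    rw [Finset.mem_filter, Finset.mem_filter]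
    constructor
    · rintro ⟨hFer, hgg⟩
      obtain ⟨hμF, hggf, -, -, -⟩ := hFmain F hFer
      have hFer' := hFer
      rw [Finset.mem_erase, hFF, Finset.mem_filter] at hFer'
      obtain ⟨hne, hFface', hFpos, hFG⟩ := hFer'
      have hFf := mem_faceFinset.1 hFface'
      have hGF : G ⊆ F := by rw [← hFG]; exact Set.inter_subset_left
      obtain ⟨⟨u₁, hu₁SS, hu₁r⟩, hmin⟩ := hcw F (hSSne F hFf hGF hne)
      obtain ⟨hu₁T, hu₁F, hu₁G⟩ := hSSmem.1 hu₁SS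
      have hνu₁ : 0 < ν u₁ := hνpos u₁ hu₁T hu₁G
      have hμu₁ : (lam - cv F • ν) u₁ = 0 := by
        rw [LinearMap.sub_apply, LinearMap.smul_apply, smul_eq_mul, sub_eq_zero, ← hu₁r,
          div_mul_cancel₀ _ (ne_of_gt hνu₁)]
      have hu₁ρ : u₁ ∈ ρ := by rw [← hgg]; exact ⟨hu₁F, hμu₁⟩
      have hcFρ : cv F = cv ρ := by
        rw [← hu₁r]
        have h1 := hconst u₁ hu₁T hu₁ρ hu₁G
        rw [h1]
        field_simp
      rw [hcFρ] at hμF hgg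
      exact ⟨hFface', hμF, hgg⟩
    · rintro ⟨hFface', hFμpos, hFμρ⟩
      have hFf := mem_faceFinset.1 hFface'
      have hρF : ρ ⊆ F := by rw [← hFμρ]; exact Set.inter_subset_left
      have hlmgens : ∀ v ∈ T, v ∈ F → v ∉ G → 0 < lam v := by
        intro v hv hvF hvG
        have h1 : 0 ≤ (lam - cv ρ • ν) v := hFμpos v hvF
        rw [LinearMap.sub_apply, LinearMap.smul_apply, smul_eq_mul, sub_nonneg] at h1
        have h2 : 0 < cv ρ * ν v := mul_pos hcρ (hνpos v hv hvG)
        linarith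
      have hlmgens' : ∀ v ∈ T, v ∈ F → 0 ≤ lam v := by
        intro v hv hvF
        by_cases hvG : v ∈ G
        · rw [hGz v hvG]
        · exact (hlmgens v hv hvF hvG).le
      have hFpos : ∀ x ∈ F, 0 ≤ lam x := by
        intro x hx
        rw [face_gens hFf] at hx
        exact nonneg_on_coneOf
          (fun v hv => hlmgens' v (Finset.mem_filter.1 hv).1 (Finset.mem_filter.1 hv).2) hx
      have hFG : F ∩ kerS = G := by
        apply Set.eq_of_subset_of_subset
        · intro x hx
          have hx' : x ∈ coneOf (T.filter (fun v => v ∈ F)) ∩ {x | lam x = 0} := by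
            rw [← face_gens hFf]
            exact hx
          rw [coneOf_inter_ker (fun v hv =>
            hlmgens' v (Finset.mem_filter.1 hv).1 (Finset.mem_filter.1 hv).2)] at hx'
          have hsub : ∀ v ∈ (T.filter (fun v => v ∈ F)).filter (fun v => lam v = 0),
              v ∈ coneOf (T.filter (fun v => l₀ v = 0)) := by
            intro v hv
            rw [Finset.mem_filter, Finset.mem_filter] at hv
            obtain ⟨⟨hv1, hv2⟩, hv3⟩ := hv
            by_contra hvG
            have hvG' : v ∉ G := by rw [hGrep]; exact hvG
            exact absurd hv3 (ne_of_gt (hlmgens v hv1 hv2 hvG'))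
          rw [hGrep]
          exact coneOf_subset_coneOf hsub hx'
        · intro x hx
          exact ⟨hρF (hGρ hx), hGz x hx⟩
      have hFne : F ≠ G := by
        intro h
        apply hρne
        apply Set.eq_of_subset_of_subset _ hGρ
        rw [← h]
        exact hρF
      have hFmem : F ∈ FF.erase G := by
        rw [Finset.mem_erase, hFF, Finset.mem_filter]
        exact ⟨hFne, hFface', hFpos, hFG⟩
      refine ⟨hFmem, ?_⟩
      have hGF : G ⊆ F := fun x hx => hρF (hGρ hx)
      have hcFρ : cv F = cv ρ := by
        obtain ⟨⟨u₁, hu₁SS, hu₁r⟩, hmin⟩ := hcw F (hSSne F hFf hGF hFne)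
        obtain ⟨hu₁T, hu₁F, hu₁G⟩ := hSSmem.1 hu₁SS
        have hνu₁ : 0 < ν u₁ := hνpos u₁ hu₁T hu₁G
        apply le_antisymm
        · have huρSS : uρ ∈ SS F := hSSmem.2 ⟨huρT, hρF huρρ, huρG⟩
          calc cv F ≤ lam uρ / ν uρ := hmin uρ huρSS
            _ = cv ρ := huρr
        · have h1 : 0 ≤ (lam - cv ρ • ν) u₁ := hFμpos u₁ hu₁F
          rw [LinearMap.sub_apply, LinearMap.smul_apply, smul_eq_mul, sub_nonneg] at h1
          rw [← hu₁r, le_div_iff₀ hνu₁]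
          linarith
      rw [hcFρ]
      exact hFμρ
  -- per-ρ vanishing of the shifted functional, needed for Nval evaluation
  have hμρzeroAll : ∀ ρ ∈ Rset, ∀ x ∈ ρ, (lam - cv ρ • ν) x = 0 := by
    intro ρ hρmem x hx
    obtain ⟨hρf, hρpos, hρG, hρdim, hGρ, hρne, -, hconst, hcρ⟩ := hRfacts ρ hρmem
    rw [face_gens hρf] at hx
    refine zero_on_coneOf (fun v hv => ?_) hx
    rw [Finset.mem_filter] at hv
    rw [LinearMap.sub_apply, LinearMap.smul_apply, smul_eq_mul, sub_eq_zero]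
    by_cases hvG : v ∈ G
    · rw [hGz v hvG, hνG v hvG, mul_zero]
    · exact hconst v hv.1 hv.2 hvG
  -- evaluate the fibers via the induction hypothesis
  have hinner : ∀ ρ ∈ Rset,
      (∑ F ∈ (FF.erase G).filter (fun F => F ∩ {x | (lam - cv F • ν) x = 0} = ρ),
        (-1 : ℤ) ^ sdim F)
      = if (∀ v ∈ T, (lam - cv ρ • ν) v ≤ 0) then (-1 : ℤ) ^ (sdim G + 1) else 0 := by
    intro ρ hρmem
    obtain ⟨hρf, -, -, hρdim, -, -, -, -, -⟩ := hRfacts ρ hρmem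
    rw [hfibeq ρ hρmem]
    have h1 : (∑ F ∈ (faceFinset T).filter
        (fun F => (∀ x ∈ F, 0 ≤ (lam - cv ρ • ν) x)
          ∧ F ∩ {x | (lam - cv ρ • ν) x = 0} = ρ), (-1 : ℤ) ^ sdim F)
        = Nsum T (lam - cv ρ • ν) ρ := rfl
    rw [h1, IH (lam - cv ρ • ν) ρ hρf hρdim, Nval]
    by_cases hcond : ∀ v ∈ T, (lam - cv ρ • ν) v ≤ 0
    · rw [if_pos ⟨hρf, hμρzeroAll ρ hρmem, hcond⟩, if_pos hcond, hρdim]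
    · rw [if_neg (fun h => hcond h.2.2), if_neg hcond]
  have hsum1 : Nsum T lam G = (-1 : ℤ) ^ sdim G
      + ∑ ρ ∈ Rset, (if (∀ v ∈ T, (lam - cv ρ • ν) v ≤ 0)
          then (-1 : ℤ) ^ (sdim G + 1) else 0) := by
    rw [Nsum]
    have hlit : (faceFinset T).filter
        (fun F => (∀ x ∈ F, 0 ≤ lam x) ∧ F ∩ {x | lam x = 0} = G) = FF := by
      rw [hFF, hkerS]
    rw [hlit, ← Finset.add_sum_erase FF _ hGFF]
    congr 1
    rw [← Finset.sum_fiberwise_of_maps_to hmapsto (fun F => (-1 : ℤ) ^ sdim F)]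
    exact Finset.sum_congr rfl hinner
  -- the unique maximal-ratio face
  have hw₀G : w₀ ∉ G := fun h => absurd (hGz w₀ h) (ne_of_gt hw₀pos)
  set PT := T.filter (fun u => 0 < lam u) with hPT
  have hPTne : PT.Nonempty := ⟨w₀, by rw [hPT]; exact Finset.mem_filter.2 ⟨hw₀T, hw₀pos⟩⟩
  have hPTmem : ∀ {u : V}, u ∈ PT ↔ u ∈ T ∧ 0 < lam u := by
    intro u; rw [hPT]; exact Finset.mem_filter
  set cs := (PT.image (fun u => lam u / ν u)).max' (hPTne.image _) with hcs
  obtain ⟨ws, hwsPT, hwsr⟩ : ∃ ws ∈ PT, lam ws / ν ws = cs := by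
    have h := Finset.max'_mem (PT.image (fun u => lam u / ν u)) (hPTne.image _)
    rw [Finset.mem_image] at h
    obtain ⟨u, hu, hur⟩ := h
    exact ⟨u, hu, by rw [hcs]; exact hur⟩
  have hmax : ∀ u ∈ PT, lam u / ν u ≤ cs := by
    intro u hu
    rw [hcs]
    exact Finset.le_max' _ (lam u / ν u)
      (Finset.mem_image_of_mem (fun u => lam u / ν u) hu)
  obtain ⟨hwsT, hwspos⟩ := hPTmem.1 hwsPT
  have hwsG : ws ∉ G := fun h => absurd (hGz ws h) (ne_of_gt hwspos)
  have hνws : 0 < ν ws := hνpos ws hwsT hwsG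
  have hcspos : 0 < cs := by rw [← hwsr]; exact div_pos hwspos hνws
  have hlmws : lam ws = cs * ν ws := by
    rw [← hwsr, div_mul_cancel₀ _ (ne_of_gt hνws)]
  set ls : Module.Dual ℝ V := cs • ν - lam with hls
  have hlsv : ∀ v, ls v = cs * ν v - lam v := fun v => by
    rw [hls, LinearMap.sub_apply, LinearMap.smul_apply, smul_eq_mul]
  have hlsT : ∀ v ∈ T, 0 ≤ ls v := by
    intro v hv
    rw [hlsv, sub_nonneg]
    by_cases hlv : 0 < lam v
    · have hvG : v ∉ G := fun h => absurd (hGz v h) (ne_of_gt hlv)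
      have hνv : 0 < ν v := hνpos v hv hvG
      have h := hmax v (hPTmem.2 ⟨hv, hlv⟩)
      rwa [div_le_iff₀ hνv] at h
    · push_neg at hlv
      have h : 0 ≤ cs * ν v := mul_nonneg hcspos.le (hνT v hv)
      linarith
  set ρs := coneOf (T.filter (fun v => ls v = 0)) with hρs
  have hρsf : IsFaceOf ρs (coneOf T) := isFaceOf_coneOf_iff.2 ⟨ls, hlsT, hρs⟩
  have hρsker : ∀ x ∈ ρs, ls x = 0 := by
    intro x hx
    rw [hρs] at hx
    exact zero_on_coneOf (fun v hv => (Finset.mem_filter.1 hv).2) hx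
  have hgen_an : ∀ v ∈ T, v ∈ ρs → v ∉ G → (0 < lam v ∧ lam v = cs * ν v) := by
    intro v hv hvρ hvG
    have h0 : ls v = 0 := hρsker v hvρ
    rw [hlsv, sub_eq_zero] at h0
    have hνv : 0 < ν v := hνpos v hv hvG
    exact ⟨by rw [← h0]; positivity, h0.symm⟩
  have hGρs : G ⊆ ρs := by
    rw [hρs]
    conv_lhs => rw [hGrep]
    refine coneOf_subset_coneOf fun v hv => ?_
    rw [Finset.mem_filter] at hv
    have hvG : v ∈ G := (hl₀mem v hv.1).2 hv.2
    refine mem_coneOf_self (Finset.mem_filter.2 ⟨hv.1, ?_⟩)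
    rw [hlsv, hGz v hvG, hνG v hvG, mul_zero, sub_zero]
  have hws_ρs : ws ∈ ρs := by
    rw [hρs]
    refine mem_coneOf_self (Finset.mem_filter.2 ⟨hwsT, ?_⟩)
    rw [hlsv, hlmws]; ring
  have hρsposg : ∀ v ∈ T.filter (fun v => ls v = 0), 0 ≤ lam v := by
    intro v hv
    rw [Finset.mem_filter] at hv
    by_cases hvG : v ∈ G
    · rw [hGz v hvG]
    · have hvρ : v ∈ ρs := by rw [hρs]; exact mem_coneOf_self (Finset.mem_filter.2 hv)
      exact (hgen_an v hv.1 hvρ hvG).1.le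
  have hρspos : ∀ x ∈ ρs, 0 ≤ lam x := by
    intro x hx
    rw [hρs] at hx
    exact nonneg_on_coneOf hρsposg hx
  have hρsG : ρs ∩ kerS = G := by
    apply Set.eq_of_subset_of_subset
    · intro x hx
      have hx' : x ∈ coneOf (T.filter (fun v => ls v = 0)) ∩ {x | lam x = 0} := by
        refine ⟨by rw [← hρs]; exact hx.1, hx.2⟩
      rw [coneOf_inter_ker hρsposg] at hx'
      have hsub : ∀ v ∈ (T.filter (fun v => ls v = 0)).filter (fun v => lam v = 0),
          v ∈ coneOf (T.filter (fun v => l₀ v = 0)) := by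
        intro v hv
        rw [Finset.mem_filter, Finset.mem_filter] at hv
        obtain ⟨⟨hv1, hv2⟩, hv3⟩ := hv
        by_contra hvG
        have hvG' : v ∉ G := by rw [hGrep]; exact hvG
        have hvρ : v ∈ ρs := by
          rw [hρs]; exact mem_coneOf_self (Finset.mem_filter.2 ⟨hv1, hv2⟩)
        exact absurd hv3 (ne_of_gt (hgen_an v hv1 hvρ hvG').1)
      rw [hGrep]
      exact coneOf_subset_coneOf hsub hx'
    · intro x hx
      exact ⟨hGρs hx, hGz x hx⟩
  have hρsdim : sdim ρs = sdim G + 1 := by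
    refine sdim_succ_of hρsf hGρs hws_ρs (hnotspan ws hwsT hwsG) ?_
    intro v hv hvρ
    by_cases hvG : v ∈ G
    · exact Submodule.mem_sup_left (Submodule.subset_span hvG)
    · obtain ⟨hlmv, hlmveq⟩ := hgen_an v hv hvρ hvG
      have hcross : lam v * ν ws = lam ws * ν v := by rw [hlmveq, hlmws]; ring
      have hw := hνgen v hv ws hwsT hlmv hwspos hcross
      exact mem_span_sup_of_cross hw (ne_of_gt hwspos)
  have hρsRset : ρs ∈ Rset := by
    rw [hRset, Finset.mem_filter]
    exact ⟨mem_faceFinset.2 hρsf, hρspos, hρsG, hρsdim⟩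
  have hcvρs : cv ρs = cs := by
    obtain ⟨-, -, -, -, -, -, ⟨uρ, huρT, huρρ, huρG, hlmuρ, huρr⟩, -, -⟩ := hRfacts ρs hρsRset
    rw [← huρr, (hgen_an uρ huρT huρρ huρG).2,
      mul_div_assoc, div_self (ne_of_gt (hνpos uρ huρT huρG)), mul_one]
  have hcondρs : ∀ v ∈ T, (lam - cv ρs • ν) v ≤ 0 := by
    intro v hv
    have h := hlsT v hv
    rw [hlsv] at h
    rw [LinearMap.sub_apply, LinearMap.smul_apply, smul_eq_mul, hcvρs]
    linarith
  have huniq : ∀ ρ ∈ Rset, (∀ v ∈ T, (lam - cv ρ • ν) v ≤ 0) → ρ = ρs := by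
    intro ρ hρmem hcond
    obtain ⟨hρf, hρpos, hρG, hρdim, hGρ, hρne, ⟨uρ, huρT, huρρ, huρG, hlmuρ, huρr⟩,
      hconst, hcρ⟩ := hRfacts ρ hρmem
    have hνuρ := hνpos uρ huρT huρG
    have hc1 : cv ρ ≤ cs := by
      rw [← huρr]
      exact hmax uρ (hPTmem.2 ⟨huρT, hlmuρ⟩)
    have hc2 : cs ≤ cv ρ := by
      have h := hcond ws hwsT
      rw [LinearMap.sub_apply, LinearMap.smul_apply, smul_eq_mul, sub_nonpos] at h
      rw [← hwsr, div_le_iff₀ hνws]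
      linarith
    have hceq : cv ρ = cs := le_antisymm hc1 hc2
    have hsp1 : Submodule.span ℝ ρ = Submodule.span ℝ G ⊔ Submodule.span ℝ {uρ} :=
      span_face_eq_sup hρf hGρ huρρ (hnotspan uρ huρT huρG) hρdim
    have hsp3 : Submodule.span ℝ ρs = Submodule.span ℝ G ⊔ Submodule.span ℝ {ws} :=
      span_face_eq_sup hρsf hGρs hws_ρs (hnotspan ws hwsT hwsG) hρsdim
    have hcross : lam uρ * ν ws = lam ws * ν uρ := by
      rw [hconst uρ huρT huρρ huρG, hlmws, hceq]; ring
    have hw := hνgen uρ huρT ws hwsT hlmuρ hwspos hcross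
    have huρmem : uρ ∈ Submodule.span ℝ G ⊔ Submodule.span ℝ {ws} :=
      mem_span_sup_of_cross hw (ne_of_gt hwspos)
    have hsp2 : Submodule.span ℝ G ⊔ Submodule.span ℝ {uρ}
        = Submodule.span ℝ G ⊔ Submodule.span ℝ {ws} := by
      have hle : Submodule.span ℝ G ⊔ Submodule.span ℝ {uρ}
          ≤ Submodule.span ℝ G ⊔ Submodule.span ℝ {ws} := by
        refine sup_le le_sup_left ?_
        rw [Submodule.span_le, Set.singleton_subset_iff]
        exact huρmem
      have hr : Module.finrank ℝ ↥(Submodule.span ℝ G ⊔ Submodule.span ℝ {ws})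
          ≤ Module.finrank ℝ ↥(Submodule.span ℝ G ⊔ Submodule.span ℝ {uρ}) := by
        rw [finrank_sup_singleton (hnotspan ws hwsT hwsG),
          finrank_sup_singleton (hnotspan uρ huρT huρG)]
      exact Submodule.eq_of_le_of_finrank_le hle hr
    have h1 := face_inter_span hρf
    have h2 := face_inter_span hρsf
    rw [← h1, ← h2, hsp1, hsp2, ← hsp3]
  have hcount : Rset.filter (fun ρ => ∀ v ∈ T, (lam - cv ρ • ν) v ≤ 0) = {ρs} := by
    apply Finset.eq_singleton_iff_unique_mem.2
    refine ⟨Finset.mem_filter.2 ⟨hρsRset, hcondρs⟩, fun ρ hρ => ?_⟩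
    rw [Finset.mem_filter] at hρ
    exact huniq ρ hρ.1 hρ.2
  rw [hsum1, ← Finset.sum_filter, hcount, Finset.sum_singleton, pow_succ]
  ring

/-! ### The Omega relation -/

theorem omega_rel [FiniteDimensional ℝ V] :
    ∀ (k : ℕ) (T : Finset V) (lam : Module.Dual ℝ V) (G : Set V),
      sdim (coneOf T) ≤ k + sdim G →
      Nsum T lam G = Nval T lam G := by
  intro k
  induction k with
  | zero =>
    intro T lam G hk
    by_cases hfz : IsFaceOf G (coneOf T) ∧ ∀ x ∈ G, lam x = 0
    · by_cases hneg : ∀ v ∈ T, lam v ≤ 0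
      · exact omega_neg hneg
      · exfalso
        push_neg at hneg
        obtain ⟨w₀, hw₀T, hw₀⟩ := hneg
        have hw₀pos : 0 < lam w₀ := hw₀
        have hle : Submodule.span ℝ G ≤ Submodule.span ℝ (coneOf T) :=
          Submodule.span_mono (face_subset hfz.1)
        have hrank : Module.finrank ℝ ↥(Submodule.span ℝ (coneOf T))
            ≤ Module.finrank ℝ ↥(Submodule.span ℝ G) := by
          rw [sdim, sdim] at hk
          simpa using hk
        have heq : Submodule.span ℝ G = Submodule.span ℝ (coneOf T) :=
          Submodule.eq_of_le_of_finrank_le hle hrank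
        have hw₀span : w₀ ∈ Submodule.span ℝ G := by
          rw [heq]; exact Submodule.subset_span (mem_coneOf_self hw₀T)
        have hw₀G : w₀ ∈ G := by
          rw [← face_inter_span hfz.1]
          exact ⟨mem_coneOf_self hw₀T, hw₀span⟩
        exact absurd (hfz.2 w₀ hw₀G) (ne_of_gt hw₀pos)
    · obtain ⟨h1, h2⟩ := omega_easy hfz
      rw [h1, h2]
  | succ k ih =>
    intro T lam G hk
    by_cases hfz : IsFaceOf G (coneOf T) ∧ ∀ x ∈ G, lam x = 0
    · by_cases hneg : ∀ v ∈ T, lam v ≤ 0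
      · exact omega_neg hneg
      · push_neg at hneg
        obtain ⟨w₀, hw₀T, hw₀⟩ := hneg
        have hw₀pos : 0 < lam w₀ := hw₀
        have hval0 : Nval T lam G = 0 := by
          rw [Nval, if_neg]
          rintro ⟨-, -, h⟩
          exact absurd (h w₀ hw₀T) (not_le.2 hw₀pos)
        rw [hval0]
        refine omega_sweep hfz.1 hfz.2 hw₀T hw₀pos ?_
        intro lam' G' hG'f hG'dim
        refine ih T lam' G' ?_
        rw [hG'dim]
        omega
    · obtain ⟨h1, h2⟩ := omega_easy hfz
      rw [h1, h2]

theorem omega_rel' [FiniteDimensional ℝ V] (T : Finset V) (lam : Module.Dual ℝ V) (G : Set V) :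
    Nsum T lam G = Nval T lam G :=
  omega_rel (sdim (coneOf T)) T lam G (by omega)

/-! ### The dichotomy -/

lemma dich1 {T : Finset V} {x : V} {F : Set V}
    (hF : IsFaceOf F (coneOf (insert (-x) T))) (hx : -x ∉ F) :
    IsFaceOf F (coneOf T) ∧ x ∉ coneOf T + (Submodule.span ℝ F : Set V) := by
  classical
  obtain ⟨l, hl, hFrep⟩ := isFaceOf_coneOf_iff.1 hF
  have hlx : 0 < l (-x) := by
    rcases (hl _ (Finset.mem_insert_self _ _)).lt_or_eq with h | h
    · exact h
    · exfalso
      apply hx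
      rw [hFrep]
      exact mem_coneOf_self (Finset.mem_filter.2 ⟨Finset.mem_insert_self _ _, h.symm⟩)
  have hfil : (insert (-x) T).filter (fun v => l v = 0) = T.filter (fun v => l v = 0) := by
    rw [Finset.filter_insert, if_neg (by exact fun h => (ne_of_gt hlx) h)]
  have hFface : IsFaceOf F (coneOf T) := isFaceOf_coneOf_iff.2
    ⟨l, fun v hv => hl v (Finset.mem_insert_of_mem hv), by rw [hFrep, hfil]⟩
  refine ⟨hFface, ?_⟩
  intro hmem
  rw [Set.mem_add] at hmem
  obtain ⟨a, ha, b, hb, hab⟩ := hmem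
  have h1 : 0 ≤ l a := nonneg_on_coneOf (fun v hv => hl v (Finset.mem_insert_of_mem hv)) ha
  have h2 : l b = 0 := by
    refine zero_on_span (fun y hy => ?_) b hb
    rw [hFrep] at hy
    exact zero_on_coneOf (fun v hv => (Finset.mem_filter.1 hv).2) hy
  have h3 : l x = l a + l b := by rw [← hab, map_add]
  have h4 : l (-x) = -(l x) := by rw [map_neg]
  linarith

lemma dich2 {T : Finset V} {x : V} {F : Set V}
    (hF : IsFaceOf F (coneOf T)) (hx : x ∉ coneOf T + (Submodule.span ℝ F : Set V)) :
    IsFaceOf F (coneOf (insert (-x) T)) ∧ -x ∉ F := by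
  classical
  have hnxF : -x ∉ F := by
    intro h
    apply hx
    rw [Set.mem_add]
    refine ⟨0, zero_mem_coneOf T, x, ?_, zero_add x⟩
    have : -x ∈ Submodule.span ℝ F := Submodule.subset_span h
    simpa using Submodule.neg_mem _ this
  obtain ⟨l₀, hl₀, hFrep⟩ := isFaceOf_coneOf_iff.1 hF
  rw [cone_add_span_face hF] at hx
  obtain ⟨l₁, hl₁, hl₁x⟩ := farkas hx
  have hl₁T : ∀ v ∈ T, 0 ≤ l₁ v := fun v hv => hl₁ v (Finset.mem_union_left _ hv)
  have hl₁F0 : ∀ v ∈ T.filter (fun v => v ∈ F), l₁ v = 0 := by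
    intro v hv
    have h1 : 0 ≤ l₁ v := hl₁ v (Finset.mem_union_right _ (Finset.mem_union_left _ hv))
    have h2 : 0 ≤ l₁ (-v) := hl₁ (-v) (Finset.mem_union_right _ (Finset.mem_union_right _
      (Finset.mem_image_of_mem _ hv)))
    rw [map_neg] at h2
    linarith
  have hlx1 : 0 < -(l₁ x) := by linarith
  set δ : ℝ := (1 + max 0 (-(l₀ (-x)))) / (-(l₁ x)) with hδ
  have hδpos : 0 < δ := div_pos (by positivity) hlx1
  set l : Module.Dual ℝ V := l₀ + δ • l₁ with hldef
  have hlv : ∀ v, l v = l₀ v + δ * l₁ v := fun v => rfl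
  have hlnx : 0 < l (-x) := by
    have h1 : δ * (-(l₁ x)) = 1 + max 0 (-(l₀ (-x))) := by
      rw [hδ, div_mul_cancel₀ _ (ne_of_gt hlx1)]
    have h2 : max 0 (-(l₀ (-x))) ≥ -(l₀ (-x)) := le_max_right _ _
    have h3 : l₁ (-x) = -(l₁ x) := by rw [map_neg]
    rw [hlv, h3]
    linarith
  have hlT : ∀ v ∈ insert (-x) T, 0 ≤ l v := by
    intro v hv
    rcases Finset.mem_insert.1 hv with rfl | hv
    · exact hlnx.le
    · rw [hlv]
      have := hl₁T v hv
      have := hl₀ v hv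
      positivity
  have hfil : (insert (-x) T).filter (fun v => l v = 0) = T.filter (fun v => l₀ v = 0) := by
    rw [Finset.filter_insert, if_neg (by exact fun h => (ne_of_gt hlnx) h)]
    refine Finset.filter_congr fun v hv => ?_
    rw [hlv]
    constructor
    · intro h0
      have h1 := hl₀ v hv
      have h2 := hl₁T v hv
      have h3 : 0 ≤ δ * l₁ v := mul_nonneg hδpos.le h2
      linarith
    · intro h0
      have hvF : v ∈ F := (face_mem_iff_gen_zero hl₀ hFrep hv).2 h0
      have := hl₁F0 v (Finset.mem_filter.2 ⟨hv, hvF⟩)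
      rw [h0, this, mul_zero, add_zero]
  exact ⟨isFaceOf_coneOf_iff.2 ⟨l, hlT, by rw [hfil, ← hFrep]⟩, hnxF⟩

lemma val_match [FiniteDimensional ℝ V] {T : Finset V} {x : V} {lam : Module.Dual ℝ V}
    (hx : 0 < lam x) (G : Set V) :
    Nval (insert (-x) T) lam G = Nval T lam G := by
  classical
  rw [Nval, Nval]
  by_cases hz : ∀ y ∈ G, lam y = 0
  swap
  · rw [if_neg (fun h => hz h.2.1), if_neg (fun h => hz h.2.1)]
  by_cases hneg : ∀ v ∈ T, lam v ≤ 0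
  swap
  · rw [if_neg, if_neg]
    · rintro ⟨-, -, h⟩; exact hneg h
    · rintro ⟨-, -, h⟩
      exact hneg (fun v hv => h v (Finset.mem_insert_of_mem hv))
  have hneg' : ∀ v ∈ insert (-x) T, lam v ≤ 0 := by
    intro v hv
    rcases Finset.mem_insert.1 hv with rfl | hv
    · rw [map_neg]; linarith
    · exact hneg v hv
  have hface : IsFaceOf G (coneOf (insert (-x) T)) ↔ IsFaceOf G (coneOf T) := by
    constructor
    · intro h
      refine (dich1 h ?_).1
      intro hmem
      have := hz _ hmem
      rw [map_neg] at this
      linarith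
    · intro h
      refine (dich2 h ?_).1
      intro hmem
      rw [Set.mem_add] at hmem
      obtain ⟨a, ha, b, hb, hab⟩ := hmem
      have h1 : lam a ≤ 0 := by
        have h' : 0 ≤ (-lam) a := nonneg_on_coneOf (fun v hv => by
          simpa using hneg v hv) ha
        simpa using h'
      have h2 : lam b = 0 := zero_on_span hz b hb
      have h3 : lam x = lam a + lam b := by rw [← hab, map_add]
      linarith
  by_cases hGf : IsFaceOf G (coneOf T)
  · rw [if_pos ⟨hface.2 hGf, hz, hneg'⟩, if_pos ⟨hGf, hz, hneg⟩]
  · rw [if_neg (fun h => hGf (hface.1 h.1)), if_neg (fun h => hGf h.1)]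


theorem psi_coneOf_eq_zero [FiniteDimensional ℝ V] (T : Finset V) (x : V)
    (lam : Module.Dual ℝ V) (hx : 0 < lam x) :
    psi (coneOf T) x lam = 0 := by
  classical
  rw [psi, face_set_eq_coe T, finsum_mem_coe_finset]
  have step1 : ∀ F ∈ faceFinset T,
      (-1:ℤ) ^ sdim F * ind (coneOf T + (Submodule.span ℝ F : Set V)) x * ind (dualCone F) lam
      = if (∀ y ∈ F, 0 ≤ lam y)
        then (-1:ℤ) ^ sdim F * ind (coneOf T + (Submodule.span ℝ F : Set V)) x else 0 := by
    intro F _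
    by_cases h : ∀ y ∈ F, 0 ≤ lam y
    · rw [if_pos h]
      have hmem : lam ∈ dualCone F := h
      simp only [ind]
      rw [if_pos hmem, mul_one]
    · rw [if_neg h]
      have hmem : lam ∉ dualCone F := fun hc => h (fun y hy => hc y hy)
      simp only [ind]
      rw [if_neg hmem, mul_zero]
  rw [Finset.sum_congr rfl step1, ← Finset.sum_filter]
  have hmaps : ∀ F ∈ (faceFinset T).filter (fun F => ∀ y ∈ F, 0 ≤ lam y),
      F ∩ {y | lam y = 0} ∈ faceFinset T := by
    intro F hF
    rw [Finset.mem_filter] at hF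
    exact mem_faceFinset.2 (face_transitive (mem_faceFinset.1 hF.1) hF.2)
  rw [← Finset.sum_fiberwise_of_maps_to hmaps
    (fun F => (-1:ℤ) ^ sdim F * ind (coneOf T + (Submodule.span ℝ F : Set V)) x)]
  refine Finset.sum_eq_zero fun G hG => ?_
  have hidx : ((faceFinset T).filter (fun F => ∀ y ∈ F, 0 ≤ lam y)).filter
      (fun F => F ∩ {y | lam y = 0} = G)
      = (faceFinset T).filter
          (fun F => (∀ y ∈ F, 0 ≤ lam y) ∧ F ∩ {y | lam y = 0} = G) := by
    rw [Finset.filter_filter]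
  rw [hidx]
  have hsplit : ∀ F ∈ (faceFinset T).filter
      (fun F => (∀ y ∈ F, 0 ≤ lam y) ∧ F ∩ {y | lam y = 0} = G),
      (-1:ℤ) ^ sdim F * ind (coneOf T + (Submodule.span ℝ F : Set V)) x
      = (-1:ℤ) ^ sdim F
        - (if x ∉ coneOf T + (Submodule.span ℝ F : Set V) then (-1:ℤ) ^ sdim F else 0) := by
    intro F _
    simp only [ind]
    by_cases h : x ∈ coneOf T + (Submodule.span ℝ F : Set V)
    · rw [if_pos h, mul_one, if_neg (fun h' => h' h), sub_zero]
    · rw [if_neg h, mul_zero, if_pos h]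
      ring
  rw [Finset.sum_congr rfl hsplit, Finset.sum_sub_distrib, ← Finset.sum_filter]
  have hidx2 : ((faceFinset T).filter
        (fun F => (∀ y ∈ F, 0 ≤ lam y) ∧ F ∩ {y | lam y = 0} = G)).filter
      (fun F => x ∉ coneOf T + (Submodule.span ℝ F : Set V))
      = (faceFinset (insert (-x) T)).filter
        (fun F => (∀ y ∈ F, 0 ≤ lam y) ∧ F ∩ {y | lam y = 0} = G) := by
    ext F
    rw [Finset.filter_filter, Finset.mem_filter, Finset.mem_filter, mem_faceFinset,
      mem_faceFinset]
    constructor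
    · rintro ⟨hFf, ⟨hc1, hc2⟩, hc3⟩
      exact ⟨(dich2 hFf hc3).1, hc1, hc2⟩
    · rintro ⟨hFf, hc1, hc2⟩
      have hnx : -x ∉ F := by
        intro h
        have h' := hc1 _ h
        rw [map_neg] at h'
        linarith
      obtain ⟨h1, h2⟩ := dich1 hFf hnx
      exact ⟨h1, ⟨hc1, hc2⟩, h2⟩
  rw [hidx2]
  have e1 : (∑ F ∈ (faceFinset T).filter
      (fun F => (∀ y ∈ F, 0 ≤ lam y) ∧ F ∩ {y | lam y = 0} = G), (-1:ℤ) ^ sdim F)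
      = Nsum T lam G := rfl
  have e2 : (∑ F ∈ (faceFinset (insert (-x) T)).filter
      (fun F => (∀ y ∈ F, 0 ≤ lam y) ∧ F ∩ {y | lam y = 0} = G), (-1:ℤ) ^ sdim F)
      = Nsum (insert (-x) T) lam G := rfl
  rw [e1, e2, omega_rel', omega_rel', val_match hx]
  ring


/-- **Proposition A.5**: `ψ_C(x,λ) = 0` whenever `λ(x) > 0`, and consequently the
same holds for `ψ_f` for every conic function `f = Σᵢ nᵢ ξ_{Cᵢ}`. -/
theorem prop_A_5
    {X : Type*} [AddCommGroup X] [Module ℝ X] [FiniteDimensional ℝ X] :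
    (∀ C : Set X, IsPolyhedralCone C →
      ∀ (x : X) (l : Module.Dual ℝ X), 0 < l x → psi C x l = 0) ∧
    (∀ (r : ℕ) (Cs : Fin r → Set X) (ns : Fin r → ℤ),
      (∀ i, IsPolyhedralCone (Cs i)) →
      ∀ (x : X) (l : Module.Dual ℝ X), 0 < l x →
        ∑ i, ns i * psi (Cs i) x l = 0) := by
  have main : ∀ C : Set X, IsPolyhedralCone C →
      ∀ (x : X) (l : Module.Dual ℝ X), 0 < l x → psi C x l = 0 := by
    rintro C ⟨S, rfl⟩ x l hl
    exact psi_coneOf_eq_zero S x l hl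
  refine ⟨main, ?_⟩
  intro r Cs ns hCs x l hl
  refine Finset.sum_eq_zero fun i _ => ?_
  rw [main (Cs i) (hCs i) x l hl, mul_zero]

end GKM
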